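/- Let S = {X_α, p^β_α, α < β < τ} be an almost continuous inverse system with nearly open bonding maps and X = a-lim S. Then the family of open subsets of X having finite rank is a base for the topology of X. -/

import Mathlib

open Topology Order

universe u

/-- An inverse system of topological spaces indexed by the ordinals below `τ`,
with continuous surjective bonding maps. -/
structure InvSystem (τ : Ordinal.{u}) where
  X : Ordinal.{u} → Type u
  topo : ∀ α, TopologicalSpace (X α)
  p : ∀ α β, α ≤ β → X β → X α
  p_cont : ∀ α β (h : α ≤ β), Continuous (p α β h)
  p_surj : ∀ α β (h : α ≤ β), β < τ → Function.Surjective (p α β h)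
  p_id : ∀ α (x : X α), p α α le_rfl x = x
  p_comp : ∀ α β γ (h₁ : α ≤ β) (h₂ : β ≤ γ) (x : X γ),
    p α β h₁ (p β γ h₂ x) = p α γ (h₁.trans h₂) x

attribute [instance] InvSystem.topo

namespace InvSystem

variable {τ : Ordinal.{u}} (S : InvSystem τ)

/-- The inverse limit of the subsystem indexed by the ordinals below `γ`. -/
def lim (γ : Ordinal.{u}) : Set (∀ α : {o : Ordinal.{u} // o < γ}, S.X α.1) :=
  {f | ∀ (a b : {o : Ordinal.{u} // o < γ}) (h : a.1 ≤ b.1), S.p a.1 b.1 h (f b) = f a}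

/-- The canonical map from `X γ` to the inverse limit of the subsystem below `γ`. -/
def diag (γ : Ordinal.{u}) (x : S.X γ) : ↥(S.lim γ) :=
  ⟨fun a => S.p a.1 γ a.2.le x, fun a b h => S.p_comp a.1 b.1 γ h b.2.le x⟩

/-- The system is almost continuous: for every limit ordinal `γ < τ`, `X γ` embeds
densely into the inverse limit of the subsystem below `γ`, compatibly with the
projections. -/
def AlmostContinuous : Prop :=
  ∀ γ : Ordinal.{u}, γ < τ → Order.IsSuccLimit γ →
    Topology.IsEmbedding (S.diag γ) ∧ DenseRange (S.diag γ)

variable (A : Set (∀ α : {o : Ordinal.{u} // o < τ}, S.X α.1))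

/-- The `α`-th limit projection restricted to `A`. -/
def proj (α : Ordinal.{u}) (h : α < τ) : ↥A → S.X α :=
  fun x => x.1 ⟨α, h⟩

/-- `A` is the almost limit of `S`: it is a subspace of the inverse limit whose
projections are onto the `X α`. -/
def IsALim : Prop :=
  A ⊆ S.lim τ ∧ ∀ (α : Ordinal.{u}) (h : α < τ), Function.Surjective (S.proj A α h)

/-- The rank of a subset `U` of the almost limit `A`. -/
def rank (U : Set ↥A) : Set Ordinal.{u} :=
  {α | ∃ h : succ α < τ,
    (interior ((S.p α (succ α) (le_succ α) ⁻¹'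
        closure (S.proj A α ((lt_succ α).trans h) '' U)) \
      closure (S.proj A (succ α) h '' U))).Nonempty}

end InvSystem

/-- A continuous map is skeletal if the interior of the closure of the image of
every nonempty open set is nonempty. -/
def IsSkeletalMap {X Y : Type*} [TopologicalSpace X] [TopologicalSpace Y] (f : X → Y) : Prop :=
  Continuous f ∧
  ∀ U : Set X, IsOpen U → U.Nonempty → (interior (closure (f '' U))).Nonempty

/-- A continuous map is nearly open if `f(U) ⊆ Int cl f(U)` for every open `U`. -/
def IsNearlyOpenMap {X Y : Type*} [TopologicalSpace X] [TopologicalSpace Y] (f : X → Y) : Prop :=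
  ∀ U : Set X, IsOpen U → f '' U ⊆ interior (closure (f '' U))

/- ### Auxiliary lemmas -/

/-- For a nearly open map `q` and an open set `G` in the target, the set
`q⁻¹(cl G) \ cl (q⁻¹ G)` has empty interior. -/
lemma nearly_open_no_rank {X Y : Type*} [TopologicalSpace X] [TopologicalSpace Y]
    {q : X → Y} (hq : IsNearlyOpenMap q) {G : Set Y} (hG : IsOpen G) :
    interior (q ⁻¹' closure G \ closure (q ⁻¹' G)) = ∅ := by
  by_contra hne
  obtain ⟨z, hz⟩ := Set.nonempty_iff_ne_empty.mpr hne
  set O := interior (q ⁻¹' closure G \ closure (q ⁻¹' G)) with hO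
  have hOopen : IsOpen O := isOpen_interior
  have hsub : O ⊆ q ⁻¹' closure G \ closure (q ⁻¹' G) := interior_subset
  have h1 : q '' O ⊆ closure G := by
    rintro _ ⟨o, ho, rfl⟩
    exact (hsub ho).1
  have h2 : ∀ o ∈ O, q o ∉ G := fun o ho hg => (hsub ho).2 (subset_closure hg)
  have hqz : q z ∈ interior (closure (q '' O)) := hq O hOopen ⟨z, hz, rfl⟩
  have hR : interior (closure (q '' O)) ⊆ closure G :=
    interior_subset.trans (closure_minimal h1 isClosed_closure)
  have hRG : (interior (closure (q '' O)) ∩ G).Nonempty :=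
    mem_closure_iff.mp (hR hqz) _ isOpen_interior hqz
  obtain ⟨g, hgR, hgG⟩ := hRG
  have hfin : ((interior (closure (q '' O)) ∩ G) ∩ q '' O).Nonempty :=
    mem_closure_iff.mp (interior_subset hgR) _ (isOpen_interior.inter hG) ⟨hgR, hgG⟩
  obtain ⟨_, ⟨-, hG'⟩, o, hoO, rfl⟩ := hfin
  exact h2 o hoO hG'

namespace InvSystem

variable {τ : Ordinal.{u}} (S : InvSystem τ)

lemma image_comp' {α β γ : Ordinal.{u}} (h₁ : α ≤ β) (h₂ : β ≤ γ) (s : Set (S.X γ)) :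
    S.p α β h₁ '' (S.p β γ h₂ '' s) = S.p α γ (h₁.trans h₂) '' s := by
  rw [Set.image_image]
  exact Set.image_congr (fun x _ => S.p_comp α β γ h₁ h₂ x)

lemma preimage_comp' {α β γ : Ordinal.{u}} (h₁ : α ≤ β) (h₂ : β ≤ γ) (s : Set (S.X α)) :
    S.p α γ (h₁.trans h₂) ⁻¹' s = S.p β γ h₂ ⁻¹' (S.p α β h₁ ⁻¹' s) := by
  ext x
  rw [Set.mem_preimage, Set.mem_preimage, Set.mem_preimage, S.p_comp α β γ h₁ h₂ x]

lemma image_preimage_lower {α ε δ : Ordinal.{u}}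
    (hαε : α ≤ ε) (hεδ : ε ≤ δ) (hδ : δ < τ) (W : Set (S.X ε)) :
    S.p α δ (hαε.trans hεδ) '' (S.p ε δ hεδ ⁻¹' W) = S.p α ε hαε '' W := by
  rw [← S.image_comp' hαε hεδ, Set.image_preimage_eq _ (S.p_surj ε δ hεδ hδ)]

lemma image_preimage_upper {ε α δ : Ordinal.{u}}
    (hεα : ε ≤ α) (hαδ : α ≤ δ) (hδ : δ < τ) (W : Set (S.X ε)) :
    S.p α δ hαδ '' (S.p ε δ (hεα.trans hαδ) ⁻¹' W) = S.p ε α hεα ⁻¹' W := by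
  rw [S.preimage_comp' hεα hαδ, Set.image_preimage_eq _ (S.p_surj α δ hαδ hδ)]

/-- The analogue of the rank for an open subset `W` of a single space `X δ`,
computed in the subsystem below `δ`. -/
def finRank (δ : Ordinal.{u}) (W : Set (S.X δ)) : Set Ordinal.{u} :=
  {α | ∃ h : succ α ≤ δ,
    (interior ((S.p α (succ α) (le_succ α) ⁻¹'
        closure (S.p α δ ((le_succ α).trans h) '' W)) \
      closure (S.p (succ α) δ h '' W))).Nonempty}

/-- At a limit ordinal, the topology of `X γ` is generated by the preimages of open
sets from lower levels. -/
lemma exists_level {γ : Ordinal.{u}} (hlim : Order.IsSuccLimit γ)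
    (hemb : Topology.IsEmbedding (S.diag γ)) {V : Set (S.X γ)} (hV : IsOpen V)
    {y : S.X γ} (hy : y ∈ V) :
    ∃ (ε : Ordinal.{u}) (hε : ε < γ) (N : Set (S.X ε)),
      IsOpen N ∧ S.p ε γ hε.le y ∈ N ∧ S.p ε γ hε.le ⁻¹' N ⊆ V := by
  classical
  have hind : Topology.IsInducing (fun x : S.X γ => (Subtype.val (S.diag γ x))) :=
    Topology.IsInducing.subtypeVal.comp hemb.toIsInducing
  obtain ⟨V'', hV''o, hpre⟩ := hind.isOpen_iff.mp hV
  have hyV'' : (fun a : {o : Ordinal.{u} // o < γ} => S.p a.1 γ a.2.le y) ∈ V'' := by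
    rw [← hpre] at hy; exact hy
  obtain ⟨I, u, hu, hpi⟩ := isOpen_pi_iff.mp hV''o _ hyV''
  rcases I.eq_empty_or_nonempty with rfl | hI
  · refine ⟨0, hlim.pos, Set.univ, isOpen_univ, trivial, fun x _ => ?_⟩
    rw [← hpre]
    apply hpi
    simp [Set.mem_pi]
  · set m := I.sup (fun a => a.1) with hm
    have hmγ : m < γ := (Finset.sup_lt_iff hlim.pos).mpr (fun b _ => b.2)
    have hle : ∀ a : {o : Ordinal.{u} // o < γ}, a ∈ I → a.1 ≤ m :=
      fun a ha => Finset.le_sup (f := fun a => a.1) ha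
    refine ⟨m, hmγ, ⋂ a ∈ I, {z : S.X m | ∀ ha : a ∈ I, S.p a.1 m (hle a ha) z ∈ u a},
      ?_, ?_, ?_⟩
    · refine isOpen_biInter_finset (fun a ha => ?_)
      have he : {z : S.X m | ∀ ha : a ∈ I, S.p a.1 m (hle a ha) z ∈ u a}
          = S.p a.1 m (hle a ha) ⁻¹' u a := by
        ext z; exact ⟨fun hz => hz ha, fun hz _ => hz⟩
      rw [he]
      exact (hu a ha).1.preimage (S.p_cont _ _ _)
    · refine Set.mem_iInter₂.mpr (fun a ha => fun ha' => ?_)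
      rw [S.p_comp a.1 m γ (hle a ha') hmγ.le y]
      exact (hu a ha').2
    · intro x hx
      rw [← hpre]
      apply hpi
      refine Set.mem_pi.mpr (fun a ha => ?_)
      have h1 := Set.mem_iInter₂.mp hx a ha ha
      rw [S.p_comp a.1 m γ (hle a ha) hmγ.le x] at h1
      exact h1

/-- Main lemma: every point of an open subset of `X δ` is contained in an open
subset of it with finite rank (computed in the subsystem below `δ`). -/
lemma main (hac : S.AlmostContinuous)
    (hno : ∀ (α β : Ordinal.{u}) (h : α ≤ β), β < τ →
      Continuous (S.p α β h) ∧ IsNearlyOpenMap (S.p α β h))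
    (δ : Ordinal.{u}) : δ < τ → ∀ V : Set (S.X δ), IsOpen V → ∀ y ∈ V,
      ∃ W, IsOpen W ∧ y ∈ W ∧ W ⊆ V ∧ (S.finRank δ W).Finite := by
  induction δ using Ordinal.induction with
  | _ δ IH =>
  intro hδ V hV y hy
  rcases Ordinal.zero_or_succ_or_isSuccLimit δ with rfl | ⟨ε, rfl⟩ | hlim
  · refine ⟨V, hV, hy, subset_rfl, Set.Finite.subset Set.finite_empty ?_⟩
    rintro α ⟨h, -⟩
    exact absurd ((lt_succ α).trans_le h) ((zero_le (a := α)).not_gt)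
  · -- successor case
    have hε : ε < τ := (lt_succ ε).trans hδ
    have hyW1 : S.p ε (succ ε) (le_succ ε) y ∈
        interior (closure (S.p ε (succ ε) (le_succ ε) '' V)) :=
      (hno ε (succ ε) (le_succ ε) hδ).2 V hV ⟨y, hy, rfl⟩
    obtain ⟨W', hW'o, hyW', hW'sub, hW'fin⟩ :=
      IH ε (lt_succ ε) hε _ isOpen_interior _ hyW1
    refine ⟨V ∩ S.p ε (succ ε) (le_succ ε) ⁻¹' W',
      hV.inter (hW'o.preimage (S.p_cont _ _ _)), ⟨hy, hyW'⟩, Set.inter_subset_left, ?_⟩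
    have key : closure (S.p ε (succ ε) (le_succ ε) ''
        (V ∩ S.p ε (succ ε) (le_succ ε) ⁻¹' W')) = closure W' := by
      apply subset_antisymm
      · apply closure_mono
        rintro _ ⟨v, ⟨-, hv2⟩, rfl⟩
        exact hv2
      · refine closure_minimal (fun w hw => ?_) isClosed_closure
        rw [mem_closure_iff]
        intro o ho hwo
        have h1 : w ∈ closure (S.p ε (succ ε) (le_succ ε) '' V) :=
          interior_subset (hW'sub hw)
        obtain ⟨z, ⟨hzo, hzW'⟩, v, hvV, hvz⟩ :=
          mem_closure_iff.mp h1 _ (ho.inter hW'o) ⟨hwo, hw⟩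
        exact ⟨z, hzo, v, ⟨hvV, show S.p ε (succ ε) (le_succ ε) v ∈ W' by
          rw [hvz]; exact hzW'⟩, hvz⟩
    have htrans : ∀ (α : Ordinal.{u}) (hαε : α ≤ ε),
        closure (S.p α (succ ε) (hαε.trans (le_succ ε)) ''
          (V ∩ S.p ε (succ ε) (le_succ ε) ⁻¹' W')) = closure (S.p α ε hαε '' W') := by
      intro α hαε
      rw [← S.image_comp' hαε (le_succ ε), ← closure_image_closure (S.p_cont α ε hαε), key,
        closure_image_closure (S.p_cont α ε hαε)]
    refine Set.Finite.subset (hW'fin.insert ε) ?_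
    rintro α ⟨h, hne⟩
    rcases le_or_gt (succ α) ε with hle | hlt
    · have hαε : α ≤ ε := (le_succ α).trans hle
      rw [htrans α hαε, htrans (succ α) hle] at hne
      exact Set.mem_insert_iff.mpr (Or.inr ⟨hle, hne⟩)
    · exact Set.mem_insert_iff.mpr
        (Or.inl (le_antisymm (succ_le_succ_iff.mp h) (lt_succ_iff.mp hlt)))
  · -- limit case
    obtain ⟨hembd, -⟩ := hac δ hδ hlim
    obtain ⟨ε, hεδ, N, hNo, hyN, hNsub⟩ := S.exists_level hlim hembd hV hy
    obtain ⟨W', hW'o, hyW', hW'N, hW'fin⟩ := IH ε hεδ (hεδ.trans hδ) N hNo _ hyN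
    refine ⟨S.p ε δ hεδ.le ⁻¹' W', hW'o.preimage (S.p_cont _ _ _), hyW',
      (Set.preimage_mono hW'N).trans hNsub, ?_⟩
    refine Set.Finite.subset hW'fin ?_
    rintro α ⟨h, hne⟩
    rcases le_or_gt (succ α) ε with hle | hlt
    · have hαε : α ≤ ε := (le_succ α).trans hle
      rw [S.image_preimage_lower hαε hεδ.le hδ W',
        S.image_preimage_lower hle hεδ.le hδ W'] at hne
      exact ⟨hle, hne⟩
    · exfalso
      have hεα : ε ≤ α := lt_succ_iff.mp hlt
      rw [S.image_preimage_upper hεα ((le_succ α).trans h) hδ W',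
        S.image_preimage_upper (hεα.trans (le_succ α)) h hδ W'] at hne
      rw [S.preimage_comp' hεα (le_succ α)] at hne
      rw [nearly_open_no_rank (hno α (succ α) (le_succ α) (h.trans_lt hδ)).2
        (hW'o.preimage (S.p_cont ε α hεα))] at hne
      exact Set.not_nonempty_empty hne

end InvSystem

open Order InvSystem in
/-- For an almost continuous inverse system with nearly open bonding maps and
`A = a-lim S`, the open subsets of `A` of finite rank form a base for the topology. -/
theorem finite_rank_basis {τ : Ordinal.{u}} (S : InvSystem τ)
    (A : Set (∀ α : {o : Ordinal.{u} // o < τ}, S.X α.1))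
    (hac : S.AlmostContinuous)
    (hno : ∀ (α β : Ordinal.{u}) (h : α ≤ β), β < τ →
      Continuous (S.p α β h) ∧ IsNearlyOpenMap (S.p α β h))
    (hA : S.IsALim A) :
    TopologicalSpace.IsTopologicalBasis
      {U : Set ↥A | IsOpen U ∧ (S.rank A U).Finite} := by
  classical
  obtain ⟨hAlim, hAsurj⟩ := hA
  apply TopologicalSpace.isTopologicalBasis_of_isOpen_of_nhds
  · rintro U ⟨hU, -⟩
    exact hU
  intro x U hxU hU
  rcases eq_or_ne τ 0 with rfl | hτ0
  · refine ⟨U, ⟨hU, Set.Finite.subset Set.finite_empty ?_⟩, hxU, subset_rfl⟩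
    rintro α ⟨h, -⟩
    exact zero_le.not_gt h
  have hτ : (0 : Ordinal.{u}) < τ := pos_iff_ne_zero.mpr hτ0
  have hval : Topology.IsInducing (Subtype.val : ↥A → _) := Topology.IsInducing.subtypeVal
  obtain ⟨V'', hV''o, hpre⟩ := hval.isOpen_iff.mp hU
  have hx'' : x.1 ∈ V'' := by rw [← hpre] at hxU; exact hxU
  obtain ⟨I, u, hu, hpi⟩ := isOpen_pi_iff.mp hV''o _ hx''
  have hbasic : ∃ (δ : Ordinal.{u}) (hδ : δ < τ) (N : Set (S.X δ)),
      IsOpen N ∧ S.proj A δ hδ x ∈ N ∧ S.proj A δ hδ ⁻¹' N ⊆ U := by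
    rcases I.eq_empty_or_nonempty with rfl | hI
    · refine ⟨0, hτ, Set.univ, isOpen_univ, trivial, fun x' _ => ?_⟩
      rw [← hpre]
      apply hpi
      simp [Set.mem_pi]
    · set m := I.sup (fun a => a.1) with hm
      have hmτ : m < τ := (Finset.sup_lt_iff hτ).mpr (fun b _ => b.2)
      have hle : ∀ a : {o : Ordinal.{u} // o < τ}, a ∈ I → a.1 ≤ m :=
        fun a ha => Finset.le_sup (f := fun a => a.1) ha
      have hcompat : ∀ (x' : ↥A) (a : {o : Ordinal.{u} // o < τ}) (ha : a ∈ I),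
          S.p a.1 m (hle a ha) (S.proj A m hmτ x') = x'.1 a := by
        intro x' a ha
        have hl := hAlim x'.2
        exact hl a ⟨m, hmτ⟩ (hle a ha)
      refine ⟨m, hmτ, ⋂ a ∈ I, {z : S.X m | ∀ ha : a ∈ I, S.p a.1 m (hle a ha) z ∈ u a},
        ?_, ?_, ?_⟩
      · refine isOpen_biInter_finset (fun a ha => ?_)
        have he : {z : S.X m | ∀ ha : a ∈ I, S.p a.1 m (hle a ha) z ∈ u a}
            = S.p a.1 m (hle a ha) ⁻¹' u a := by
          ext z; exact ⟨fun hz => hz ha, fun hz _ => hz⟩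
        rw [he]
        exact (hu a ha).1.preimage (S.p_cont _ _ _)
      · refine Set.mem_iInter₂.mpr (fun a ha => fun ha' => ?_)
        rw [hcompat x a ha']
        exact (hu a ha').2
      · intro x' hx'
        rw [← hpre]
        apply hpi
        refine Set.mem_pi.mpr (fun a ha => ?_)
        have h1 := Set.mem_iInter₂.mp hx' a ha ha
        rw [hcompat x' a ha] at h1
        exact h1
  obtain ⟨δ, hδ, N, hNo, hxN, hNsub⟩ := hbasic
  obtain ⟨W, hWo, hxW, hWN, hWfin⟩ := S.main hac hno δ hδ N hNo _ hxN
  have hcontp : Continuous (S.proj A δ hδ) :=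
    (continuous_apply (⟨δ, hδ⟩ : {o : Ordinal.{u} // o < τ})).comp continuous_subtype_val
  have hcompat2 : ∀ (x' : ↥A) (α : Ordinal.{u}) (h : α ≤ δ),
      S.p α δ h (x'.1 ⟨δ, hδ⟩) = x'.1 ⟨α, h.trans_lt hδ⟩ := by
    intro x' α h
    have hl := hAlim x'.2
    exact hl ⟨α, h.trans_lt hδ⟩ ⟨δ, hδ⟩ h
  have hcompat3 : ∀ (x' : ↥A) (α : Ordinal.{u}) (h : δ ≤ α) (hα : α < τ),
      S.p δ α h (x'.1 ⟨α, hα⟩) = x'.1 ⟨δ, hδ⟩ := by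
    intro x' α h hα
    have hl := hAlim x'.2
    exact hl ⟨δ, hδ⟩ ⟨α, hα⟩ h
  have him : ∀ (α : Ordinal.{u}) (h : α ≤ δ) (hα : α < τ),
      S.proj A α hα '' (S.proj A δ hδ ⁻¹' W) = S.p α δ h '' W := by
    intro α h hα
    ext z
    constructor
    · rintro ⟨x', hx', rfl⟩
      exact ⟨x'.1 ⟨δ, hδ⟩, hx', hcompat2 x' α h⟩
    · rintro ⟨w, hw, rfl⟩
      obtain ⟨x', hx'⟩ := hAsurj δ hδ w
      refine ⟨x', ?_, ?_⟩
      · show x'.1 ⟨δ, hδ⟩ ∈ W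
        rw [show x'.1 ⟨δ, hδ⟩ = w from hx']
        exact hw
      · show x'.1 ⟨α, hα⟩ = S.p α δ h w
        rw [← hx']
        exact (hcompat2 x' α h).symm
  have him2 : ∀ (α : Ordinal.{u}) (h : δ ≤ α) (hα : α < τ),
      S.proj A α hα '' (S.proj A δ hδ ⁻¹' W) = S.p δ α h ⁻¹' W := by
    intro α h hα
    ext z
    constructor
    · rintro ⟨x', hx', rfl⟩
      show S.p δ α h (x'.1 ⟨α, hα⟩) ∈ W
      rw [hcompat3 x' α h hα]
      exact hx'
    · intro hz
      obtain ⟨x', hx'⟩ := hAsurj α hα z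
      refine ⟨x', ?_, hx'⟩
      show x'.1 ⟨δ, hδ⟩ ∈ W
      rw [← hcompat3 x' α h hα]
      rw [show x'.1 ⟨α, hα⟩ = z from hx']
      exact hz
  refine ⟨S.proj A δ hδ ⁻¹' W, ⟨hWo.preimage hcontp, Set.Finite.subset hWfin ?_⟩,
    hxW, (Set.preimage_mono hWN).trans hNsub⟩
  rintro α ⟨hsucc, hne⟩
  rcases le_or_gt (succ α) δ with hle | hlt
  · have hαδ : α ≤ δ := (le_succ α).trans hle
    rw [him α hαδ ((lt_succ α).trans hsucc), him (succ α) hle hsucc] at hne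
    exact ⟨hle, hne⟩
  · exfalso
    have hδα : δ ≤ α := lt_succ_iff.mp hlt
    rw [him2 α hδα ((lt_succ α).trans hsucc),
      him2 (succ α) (hδα.trans (le_succ α)) hsucc] at hne
    rw [S.preimage_comp' hδα (le_succ α)] at hne
    rw [nearly_open_no_rank (hno α (succ α) (le_succ α) hsucc).2
      (hWo.preimage (S.p_cont δ α hδα))] at hne
    exact Set.not_nonempty_empty hne
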